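/- With the convention Z(2) = 1 and Z(p) = 81(2p−4)!/(128(p−2)!p!) · (16/9)^p for p ≥ 3, the generating function satisfies Σ_{p ≥ 2} Z(p) x^p = ((9−64x)^{3/2} + 288x − 27) / 512 for |x| < 9/64. -/

import Mathlib

open Nat Filter Real

/-- The partition function `Z(p)` of simple Boltzmann triangulations of the `p`-gon,
with the convention `Z(2) = 1`. -/
noncomputable def Zfun (p : ℕ) : ℝ :=
  if p = 2 then 1 else 81 * ((2*p-4)! : ℝ) / (128 * (p-2)! * p !) * (16/9)^p

namespace ZGF

/-- The generalized binomial coefficients `C(3/2, k)`. -/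
noncomputable def d : ℕ → ℝ
  | 0 => 1
  | (n+1) => d n * ((3:ℝ)/2 - (n:ℝ)) / ((n:ℝ) + 1)

lemma d_succ (n : ℕ) : d (n+1) = d n * ((3:ℝ)/2 - (n:ℝ)) / ((n:ℝ) + 1) := rfl

lemma d_zero : d 0 = 1 := rfl

lemma d_one : d 1 = 3/2 := by
  rw [d_succ, d_zero]; norm_num

lemma d_abs_le : ∀ n, |d n| ≤ 3/2
  | 0 => by rw [d_zero, abs_of_pos (by norm_num : (0:ℝ) < 1)]; norm_num
  | 1 => by rw [d_one, abs_of_pos (by norm_num : (0:ℝ) < 3/2)]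
  | (n+2) => by
    have ih := d_abs_le (n+1)
    have h1 : |d (n+2)| = |d (n+1)| * (|(3:ℝ)/2 - ((n+1:ℕ):ℝ)| / |((n+1:ℕ):ℝ) + 1|) := by
      rw [d_succ, abs_div, abs_mul, mul_div_assoc]
    have h2 : |(3:ℝ)/2 - ((n+1:ℕ):ℝ)| / |((n+1:ℕ):ℝ) + 1| ≤ 1 := by
      rw [div_le_one (by positivity)]
      rw [abs_le]
      have : (0:ℝ) ≤ (n:ℝ) := Nat.cast_nonneg n
      push_cast
      constructor
      · rw [abs_of_pos (by positivity)]; linarith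
      · rw [abs_of_pos (by positivity)]; linarith
    calc |d (n+2)| ≤ |d (n+1)| * 1 := by
          rw [h1]; exact mul_le_mul_of_nonneg_left h2 (abs_nonneg _)
      _ ≤ 3/2 := by rw [mul_one]; exact ih

/-- Partial Cauchy-product coefficients. -/
noncomputable def S (k : ℕ) : ℝ := ∑ i ∈ Finset.range (k+1), d i * d (k - i)

lemma refl_sum (m : ℕ) :
    ∑ j ∈ Finset.range (m+1), ((m - j : ℕ) : ℝ) * (d j * d (m - j))
      = ∑ j ∈ Finset.range (m+1), (j:ℝ) * (d j * d (m - j)) := by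
  have h := Finset.sum_range_reflect (fun i => (i:ℝ) * (d i * d (m - i))) (m+1)
  rw [← h]
  apply Finset.sum_congr rfl
  intro j hj
  rw [Finset.mem_range] at hj
  have hj' : j ≤ m := Nat.lt_succ_iff.mp hj
  have h1 : m + 1 - 1 - j = m - j := by omega
  rw [h1, Nat.sub_sub_self hj']
  ring

lemma S_rec (k : ℕ) : ((k:ℝ) + 1) * S (k+1) = (3 - (k:ℝ)) * S k := by
  have step1 : ((k:ℝ) + 1) * S (k+1)
      = 2 * ∑ i ∈ Finset.range (k+2), (i:ℝ) * (d i * d (k+1-i)) := by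
    rw [S, Finset.mul_sum]
    have : ∀ i ∈ Finset.range (k+2),
        ((k:ℝ)+1) * (d i * d (k+1-i))
          = (i:ℝ) * (d i * d (k+1-i)) + ((k+1-i : ℕ):ℝ) * (d i * d (k+1-i)) := by
      intro i hi
      rw [Finset.mem_range] at hi
      have hi' : i ≤ k + 1 := Nat.lt_succ_iff.mp hi
      have : ((k+1-i : ℕ):ℝ) = ((k:ℝ)+1) - (i:ℝ) := by
        rw [Nat.cast_sub hi']; push_cast; ring
      rw [this]; ring
    rw [Finset.sum_congr rfl this, Finset.sum_add_distrib, refl_sum (k+1)]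
    ring
  have step2 : ∑ i ∈ Finset.range (k+2), (i:ℝ) * (d i * d (k+1-i))
      = ∑ i ∈ Finset.range (k+1), ((3:ℝ)/2 - (i:ℝ)) * (d i * d (k-i)) := by
    rw [Finset.sum_range_succ']
    simp only [Nat.cast_zero, zero_mul, add_zero, Nat.succ_sub_succ]
    apply Finset.sum_congr rfl
    intro i _
    have hne : ((i:ℝ) + 1) ≠ 0 := by positivity
    have hd : ((i:ℝ)+1) * d (i+1) = ((3:ℝ)/2 - (i:ℝ)) * d i := by
      rw [d_succ]; field_simp
    push_cast
    calc ((i:ℝ)+1) * (d (i+1) * d (k-i)) = (((i:ℝ)+1) * d (i+1)) * d (k-i) := by ring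
      _ = (((3:ℝ)/2 - (i:ℝ)) * d i) * d (k-i) := by rw [hd]
      _ = ((3:ℝ)/2 - (i:ℝ)) * (d i * d (k-i)) := by ring
  have step3 : 2 * ∑ i ∈ Finset.range (k+1), (i:ℝ) * (d i * d (k-i)) = (k:ℝ) * S k := by
    have h := refl_sum k
    have : 2 * ∑ i ∈ Finset.range (k+1), (i:ℝ) * (d i * d (k-i))
        = ∑ i ∈ Finset.range (k+1), ((i:ℝ) + ((k-i:ℕ):ℝ)) * (d i * d (k-i)) := by
      rw [two_mul]
      nth_rewrite 2 [← h]
      rw [← Finset.sum_add_distrib]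
      apply Finset.sum_congr rfl
      intro i _; ring
    rw [this, S, Finset.mul_sum]
    apply Finset.sum_congr rfl
    intro i hi
    rw [Finset.mem_range] at hi
    have hi' : i ≤ k := Nat.lt_succ_iff.mp hi
    have : ((k-i:ℕ):ℝ) = (k:ℝ) - (i:ℝ) := by rw [Nat.cast_sub hi']
    rw [this]; ring
  have expand : ∑ i ∈ Finset.range (k+1), ((3:ℝ)/2 - (i:ℝ)) * (d i * d (k-i))
      = (3:ℝ)/2 * S k - ∑ i ∈ Finset.range (k+1), (i:ℝ) * (d i * d (k-i)) := by
    rw [S, Finset.mul_sum, ← Finset.sum_sub_distrib]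
    apply Finset.sum_congr rfl
    intro i _; ring
  rw [step1, step2, expand]
  linarith [step3]

lemma choose3 (k : ℕ) : ((k:ℝ)+1) * ((Nat.choose 3 (k+1)) : ℝ) = (3 - (k:ℝ)) * ((Nat.choose 3 k) : ℝ) := by
  match k with
  | 0 => norm_num
  | 1 => norm_num [Nat.choose]
  | 2 => norm_num [Nat.choose]
  | 3 => norm_num [Nat.choose]
  | (k+4) =>
    rw [Nat.choose_eq_zero_of_lt (by omega), Nat.choose_eq_zero_of_lt (by omega)]
    push_cast; ring

lemma S_eq : ∀ k, S k = ((Nat.choose 3 k) : ℝ)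
  | 0 => by simp [S, d_zero]
  | (k+1) => by
    have ih := S_eq k
    have h := S_rec k
    rw [ih] at h
    have hc := choose3 k
    have hk : ((k:ℝ)+1) ≠ 0 := by positivity
    exact mul_left_cancel₀ hk (h.trans hc.symm)

/-- The sum of the binomial series. -/
noncomputable def G (t : ℝ) : ℝ := ∑' k, d k * t^k

lemma summable_norm {t : ℝ} (ht : |t| < 1) : Summable (fun k => ‖d k * t^k‖) := by
  apply Summable.of_nonneg_of_le (fun k => norm_nonneg _) (fun k => ?_)
    ((summable_geometric_of_lt_one (abs_nonneg t) ht).mul_left (3/2))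
  rw [norm_mul, norm_pow, Real.norm_eq_abs, Real.norm_eq_abs]
  exact mul_le_mul_of_nonneg_right (d_abs_le k) (by positivity)

lemma hasSum_G {t : ℝ} (ht : |t| < 1) : HasSum (fun k => d k * t^k) (G t) :=
  (summable_norm ht).of_norm.hasSum

lemma G_sq {t : ℝ} (ht : |t| < 1) : G t * G t = (1+t)^3 := by
  have hs := summable_norm ht
  have h := tsum_mul_tsum_eq_tsum_sum_range_of_summable_norm hs hs
  rw [G, h]
  have hterm : ∀ n : ℕ, ∑ i ∈ Finset.range (n+1), (d i * t^i) * (d (n-i) * t^(n-i))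
      = ((Nat.choose 3 n : ℕ) : ℝ) * t^n := by
    intro n
    rw [← S_eq, S, Finset.sum_mul]
    apply Finset.sum_congr rfl
    intro i hi
    rw [Finset.mem_range] at hi
    have hi' : i ≤ n := Nat.lt_succ_iff.mp hi
    have hp : t^i * t^(n-i) = t^n := by
      rw [← pow_add, Nat.add_sub_cancel' hi']
    linear_combination (d i * d (n-i)) * hp
  rw [tsum_congr hterm]
  rw [tsum_eq_sum (s := Finset.range 4) (by
    intro n hn
    rw [Finset.mem_range, not_lt] at hn
    rw [Nat.choose_eq_zero_of_lt (by omega)]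
    simp)]
  simp [Finset.sum_range_succ]
  ring

lemma abs_le_of_mem_uIcc {y t : ℝ} (ht : t ∈ Set.uIcc 0 y) : |t| ≤ |y| := by
  rw [Set.mem_uIcc] at ht
  rw [abs_le]
  rcases ht with ⟨h1, h2⟩ | ⟨h1, h2⟩ <;>
    constructor <;> linarith [le_abs_self y, neg_abs_le y]

lemma G_zero : G 0 = 1 := by
  rw [G, tsum_eq_single 0 (fun b hb => by simp [zero_pow hb])]
  simp [d_zero]

lemma G_ne_zero {t : ℝ} (ht : |t| < 1) : G t ≠ 0 := by
  have h1 : -1 < t := by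
    have := neg_abs_le t; linarith
  have h1' : (0:ℝ) < 1 + t := by linarith
  have h2 : (0:ℝ) < (1+t)^3 := by positivity
  have h3 := G_sq ht
  intro h
  rw [h] at h3
  nlinarith

lemma G_pos {y : ℝ} (hy : |y| < 1) : 0 < G y := by
  by_contra h
  push_neg at h
  have hne := G_ne_zero hy
  have hGy : G y < 0 := lt_of_le_of_ne h hne
  have hcont : ContinuousOn G (Set.uIcc 0 y) := by
    apply continuousOn_tsum (u := fun k => 3/2 * |y|^k)
    · intro k
      exact (Continuous.mul continuous_const (continuous_pow k)).continuousOn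
    · exact (summable_geometric_of_lt_one (abs_nonneg y) hy).mul_left (3/2)
    · intro n t htm
      rw [norm_mul, norm_pow, Real.norm_eq_abs, Real.norm_eq_abs]
      have h1 := abs_le_of_mem_uIcc htm
      have h2 : |t|^n ≤ |y|^n := pow_le_pow_left₀ (abs_nonneg t) h1 n
      exact mul_le_mul (d_abs_le n) h2 (by positivity) (by norm_num)
  have hivt := intermediate_value_uIcc hcont
  have h0 : (0:ℝ) ∈ Set.uIcc (G 0) (G y) := by
    rw [G_zero, Set.mem_uIcc]
    right
    constructor <;> [linarith; norm_num]
  obtain ⟨t, htm, hGt⟩ := hivt h0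
  have htlt : |t| < 1 := lt_of_le_of_lt (abs_le_of_mem_uIcc htm) hy
  exact G_ne_zero htlt hGt

lemma G_eq {y : ℝ} (hy : |y| < 1) : G y = (1+y) ^ ((3:ℝ)/2) := by
  have h1 : (0:ℝ) < 1 + y := by
    have := neg_abs_le y; linarith
  have h2 : ((1+y) ^ ((3:ℝ)/2))^2 = (1+y)^3 := by
    rw [← Real.rpow_natCast ((1+y) ^ ((3:ℝ)/2)) 2, ← Real.rpow_mul h1.le,
      ← Real.rpow_natCast (1+y) 3]
    norm_num
  have h3 : (0:ℝ) < (1+y) ^ ((3:ℝ)/2) := Real.rpow_pos_of_pos h1 _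
  have h4 := G_sq hy
  have h5 := G_pos hy
  nlinarith

/-- Explicit closed form for `27/512 * d (n+2) * (-64/9)^(n+2)`. -/
lemma key : ∀ n : ℕ, 27/512 * (d (n+2) * ((-64:ℝ)/9)^(n+2))
    = 2 * ((2*n)! : ℝ) / ((n ! : ℝ) * ((n+2)! : ℝ)) * (16/9)^n
  | 0 => by
    have : d 2 = 3/8 := by
      rw [show d 2 = d (1 + 1) from rfl, d_succ, d_one]
      norm_num
    rw [this]
    norm_num [Nat.factorial]
  | (n+1) => by
    have ih := key n
    have hne1 : ((n ! : ℕ) : ℝ) ≠ 0 := Nat.cast_ne_zero.mpr (Nat.factorial_ne_zero n)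
    have hne2 : (((n+2)! : ℕ) : ℝ) ≠ 0 := Nat.cast_ne_zero.mpr (Nat.factorial_ne_zero _)
    have hne3 : ((n:ℝ)+3) ≠ 0 := by positivity
    have hne4 : ((n:ℝ)+1) ≠ 0 := by positivity
    have hf1 : ((2*(n+1))! : ℝ) = (2*(n:ℝ)+2) * (2*(n:ℝ)+1) * ((2*n)! : ℝ) := by
      rw [show 2*(n+1) = (2*n+1)+1 by ring, Nat.factorial_succ, Nat.factorial_succ]
      push_cast; ring
    have hf2 : (((n+1) : ℕ)! : ℝ) = ((n:ℝ)+1) * ((n ! : ℕ) : ℝ) := by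
      rw [Nat.factorial_succ]; push_cast; ring
    have hf3 : (((n+3) : ℕ)! : ℝ) = ((n:ℝ)+3) * (((n+2)! : ℕ) : ℝ) := by
      rw [show n+3 = (n+2)+1 from rfl, Nat.factorial_succ]; push_cast; ring
    have e1 : 27/512 * (d (n+3) * ((-64:ℝ)/9)^(n+3))
        = (27/512 * (d (n+2) * ((-64:ℝ)/9)^(n+2))) *
          (((3:ℝ)/2 - ((n+2:ℕ):ℝ)) / (((n+2:ℕ):ℝ) + 1) * ((-64:ℝ)/9)) := by
      rw [d_succ (n+2),
        show ((-64:ℝ)/9)^(n+3) = ((-64:ℝ)/9)^(n+2) * ((-64:ℝ)/9) from pow_succ _ _]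
      ring
    show 27/512 * (d (n+3) * ((-64:ℝ)/9)^(n+3))
        = 2 * ((2*(n+1))! : ℝ) / ((((n+1) : ℕ)! : ℝ) * (((n+3) : ℕ)! : ℝ)) * (16/9)^(n+1)
    rw [e1, ih, hf1, hf2, hf3,
      show ((16:ℝ)/9)^(n+1) = ((16:ℝ)/9)^n * (16/9) from pow_succ _ _]
    push_cast
    field_simp
    ring

lemma Zfun_eq (n : ℕ) : Zfun (n+2) = 2 * ((2*n)! : ℝ) / ((n ! : ℝ) * ((n+2)! : ℝ)) * (16/9)^n := by
  match n with
  | 0 => norm_num [Zfun, Nat.factorial]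
  | (m+1) =>
    rw [Zfun, if_neg (by omega)]
    rw [show 2*(m+1+2)-4 = 2*(m+1) from by omega, show (m+1+2)-2 = m+1 from by omega]
    have hne1 : (((m+1) ! : ℕ) : ℝ) ≠ 0 := Nat.cast_ne_zero.mpr (Nat.factorial_ne_zero _)
    have hne2 : (((m+1+2)! : ℕ) : ℝ) ≠ 0 := Nat.cast_ne_zero.mpr (Nat.factorial_ne_zero _)
    rw [show m+1+2 = (m+1)+2 from rfl]
    rw [show (16:ℝ)/9 = 16/9 from rfl]
    have hp : ((16:ℝ)/9)^(m+1+2) = (16/9)^(m+1) * (16/9)^2 := by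
      rw [← pow_add]
    rw [show m+3 = m+1+2 from rfl] at *
    field_simp
    ring

lemma term_eq (x : ℝ) (n : ℕ) :
    Zfun (n+2) * x^(n+2) = 27/512 * (d (n+2) * ((-64:ℝ)/9 * x)^(n+2)) := by
  rw [mul_pow, Zfun_eq, ← key n]
  ring

end ZGF

/-- The generating function `Σ_{p ≥ 2} Z(p) x^p = ((9-64x)^{3/2} + 288x - 27)/512`
for `|x| < 9/64`. -/
theorem Z_generating_function (x : ℝ) (hx : |x| < 9/64) :
    HasSum (fun p : ℕ => Zfun (p+2) * x^(p+2))
      (((9 - 64*x) ^ ((3:ℝ)/2) + 288*x - 27) / 512) := by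
  set y : ℝ := (-64:ℝ)/9 * x with hy_def
  have hy : |y| < 1 := by
    rw [hy_def, abs_mul, show |(-64:ℝ)/9| = 64/9 from by rw [abs_of_nonpos (by norm_num)]; norm_num]
    nlinarith [abs_nonneg x]
  have h := ZGF.hasSum_G hy
  have hsum2 : HasSum (fun k : ℕ => ZGF.d k * y ^ k)
      ((ZGF.G y - (1 + 3/2 * y)) + ∑ i ∈ Finset.range 2, ZGF.d i * y ^ i) := by
    convert h using 1
    simp only [Finset.sum_range_succ, Finset.sum_range_zero, ZGF.d_zero, ZGF.d_one,
      pow_zero, pow_one, zero_add, one_mul]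
    ring
  have h2 := (hasSum_nat_add_iff (f := fun k : ℕ => ZGF.d k * y ^ k) 2).mpr hsum2
  have h3 := h2.mul_left (27/512)
  have h9y : 9 - 64*x = 9 * (1 + y) := by rw [hy_def]; ring
  have h1y : (0:ℝ) ≤ 1 + y := by
    have := neg_abs_le y; linarith
  have h27 : (9:ℝ) ^ ((3:ℝ)/2) = 27 := by
    rw [show (9:ℝ) = 3^(2:ℕ) from by norm_num, ← Real.rpow_natCast (3:ℝ) 2,
      ← Real.rpow_mul (by norm_num)]
    rw [show (2:ℕ) * ((3:ℝ)/2) = ((3:ℕ):ℝ) from by push_cast; ring, Real.rpow_natCast]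
    norm_num
  have hval : (9 - 64*x) ^ ((3:ℝ)/2) = 27 * (1+y) ^ ((3:ℝ)/2) := by
    rw [h9y, Real.mul_rpow (by norm_num) h1y, h27]
  have hf : (fun p : ℕ => Zfun (p+2) * x^(p+2)) = fun i => 27 / 512 * (ZGF.d (i + 2) * y ^ (i + 2)) := by
    funext n
    exact ZGF.term_eq x n
  have hv : (((9 - 64*x) ^ ((3:ℝ)/2) + 288*x - 27) / 512) = 27 / 512 * (ZGF.G y - (1 + 3 / 2 * y)) := by
    rw [hval, ← ZGF.G_eq hy, hy_def]
    ring
  rw [hf, hv]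
  exact h3
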